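/- arXiv:1709.08033 — 3 statements merged into one kernel-verified Lean document; each statement's English description precedes it below -/
import Mathlib

section
/- Let (e_1, …, e_r) be a basis of C_n^r with each e_i of order n. The sequence consisting of n − 1 copies of ∑_{i∈I} e_i for each non-empty subset I ⊆ {1,…,r} contains no non-empty zero-sum subsequence of length at most n. -/
open Multiset Finset Filter

/-- The Davenport constant: smallest `t ≥ 1` such that every multiset of `t` or more
elements of `G` has a non-empty zero-sum sub-multiset. -/
noncomputable def DavCon (G : Type*) [AddCommGroup G] : ℕ :=
  sInf {t : ℕ | 1 ≤ t ∧ ∀ S : Multiset G, t ≤ Multiset.card S →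
    ∃ T, T ≤ S ∧ T ≠ 0 ∧ T.sum = 0}

/-- The η-invariant: smallest `t ≥ 1` such that every multiset of `t` or more elements of `G`
has a non-empty zero-sum sub-multiset of length at most `exp G`. -/
noncomputable def EtaCon (G : Type*) [AddCommGroup G] : ℕ :=
  sInf {t : ℕ | 1 ≤ t ∧ ∀ S : Multiset G, t ≤ Multiset.card S →
    ∃ T, T ≤ S ∧ T ≠ 0 ∧ Multiset.card T ≤ AddMonoid.exponent G ∧ T.sum = 0}

/-- `maxPP n` is the greatest prime power dividing `n`, with `maxPP 1 = 1`. -/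
def maxPP (n : ℕ) : ℕ := WithBot.unbotD 1 ((n.divisors).filter IsPrimePow).max

/-- A sub-multiset of a mapped multiset is itself a mapped multiset. -/
lemma aux_le_map {α β : Type*} (f : α → β) (t : Multiset β) :
    ∀ s : Multiset α, t ≤ s.map f → ∃ u, u ≤ s ∧ t = u.map f := by
  classical
  induction t using Multiset.induction with
  | empty => exact fun s _ => ⟨0, Multiset.zero_le _, rfl⟩
  | cons b t ih =>
    intro s h
    have hb : b ∈ s.map f := Multiset.mem_of_le h (Multiset.mem_cons_self _ _)
    obtain ⟨a, ha, rfl⟩ := Multiset.mem_map.mp hb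
    have hs : s.map f = f a ::ₘ (s.erase a).map f := by
      conv_lhs => rw [← Multiset.cons_erase ha]
      simp
    have h' : t ≤ (s.erase a).map f := by
      have := Multiset.erase_le_erase (f a) h
      rwa [Multiset.erase_cons_head, hs, Multiset.erase_cons_head] at this
    obtain ⟨u, hu, rfl⟩ := ih (s.erase a) h'
    refine ⟨a ::ₘ u, ?_, by simp⟩
    rw [← Multiset.cons_erase ha]
    exact Multiset.cons_le_cons _ hu

lemma aux_sum_swap {G : Type*} [AddCommGroup G] {r : ℕ} (e : Fin r → G)
    (T : Multiset (Finset (Fin r))) :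
    (T.map fun I => ∑ i ∈ I, e i).sum
      = ∑ i, (Multiset.card (T.filter (fun I => i ∈ I))) • e i := by
  induction T using Multiset.induction with
  | empty => simp
  | cons I T ih =>
    rw [Multiset.map_cons, Multiset.sum_cons, ih]
    have : ∀ i : Fin r,
        Multiset.card ((I ::ₘ T).filter (fun J => i ∈ J))
          = (if i ∈ I then 1 else 0) + Multiset.card (T.filter (fun J => i ∈ J)) := by
      intro i
      rw [Multiset.filter_cons]
      split <;> simp [Nat.add_comm]
    simp only [this, add_smul, Finset.sum_add_distrib]
    congr 1
    simp [ite_smul]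

/-- the sequence of `n−1` copies of each subset sum `∑_{i∈I} e_i` has no
non-empty zero-sum subsequence of length at most `n`. -/
theorem stmt_5 (G : Type*) [AddCommGroup G] (r n : ℕ) (hn : 1 ≤ n) (hr : 1 ≤ r)
    (e : Fin r → G) (hord : ∀ i, addOrderOf (e i) = n)
    (hbasis : Function.Bijective
      (fun a : (Fin r → ZMod n) => ∑ i, (a i).val • e i)) :
    ∀ T : Multiset G,
      T ≤ (∑ I ∈ Finset.univ.powerset.filter (fun I : Finset (Fin r) => I.Nonempty),
            Multiset.replicate (n - 1) (∑ i ∈ I, e i)) →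
      T ≠ 0 → Multiset.card T ≤ n → T.sum ≠ 0 := by
  intro T hT hT0 hTcard hTsum
  haveI : NeZero n := ⟨by omega⟩
  rcases Nat.lt_or_ge n 2 with h1 | h2
  · -- n = 1 case : the big multiset is 0
    have hn1 : n = 1 := by omega
    subst hn1
    simp only [Nat.sub_self, Multiset.replicate_zero, Finset.sum_const_zero,
      Multiset.le_zero] at hT
    exact hT0 hT
  -- divisibility key
  have key : ∀ b : Fin r → ℕ, ∑ i, b i • e i = 0 → ∀ i, n ∣ b i := by
    intro b hb i
    have hv : ∀ j, ((b j : ZMod n)).val • e j = b j • e j := by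
      intro j
      rw [ZMod.val_natCast, ← hord j]
      exact mod_addOrderOf_nsmul (e j) (b j)
    have h0 : (fun a : Fin r → ZMod n => ∑ i, (a i).val • e i) (fun j => (b j : ZMod n))
        = (fun a : Fin r → ZMod n => ∑ i, (a i).val • e i) 0 := by
      simp only [Pi.zero_apply, ZMod.val_zero, zero_smul, Finset.sum_const_zero]
      exact (Finset.sum_congr rfl fun j _ => hv j).trans hb
    have := congrFun (hbasis.injective h0) i
    exact (ZMod.natCast_eq_zero_iff _ _).mp this
  -- the index multiset
  set g : Finset (Fin r) → G := fun I => ∑ i ∈ I, e i with hg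
  set S' : Multiset (Finset (Fin r)) :=
    ∑ I ∈ Finset.univ.powerset.filter (fun I : Finset (Fin r) => I.Nonempty),
      Multiset.replicate (n - 1) I with hS'
  have hmap : (∑ I ∈ Finset.univ.powerset.filter (fun I : Finset (Fin r) => I.Nonempty),
      Multiset.replicate (n - 1) (g I)) = S'.map g := by
    have h := map_sum (Multiset.mapAddMonoidHom g)
      (fun I : Finset (Fin r) => Multiset.replicate (n - 1) I)
      (Finset.univ.powerset.filter (fun I : Finset (Fin r) => I.Nonempty))
    simp only [Multiset.coe_mapAddMonoidHom, Multiset.map_replicate] at h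
    exact h.symm
  rw [hmap] at hT
  obtain ⟨T', hT'le, rfl⟩ := aux_le_map g T S' hT
  have hT'0 : T' ≠ 0 := by
    intro h; exact hT0 (by simp [h])
  have hT'card : Multiset.card T' ≤ n := by simpa using hTcard
  -- members of S' are nonempty
  have hmemS' : ∀ I ∈ S', I.Nonempty := by
    intro I hI
    rw [hS', Multiset.mem_sum] at hI
    obtain ⟨J, hJ, hIJ⟩ := hI
    rw [Multiset.eq_of_mem_replicate hIJ]
    exact (Finset.mem_filter.mp hJ).2
  have hmemT' : ∀ I ∈ T', I.Nonempty := fun I hI => hmemS' I (Multiset.mem_of_le hT'le hI)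
  -- count bound
  have hcount : ∀ I : Finset (Fin r), T'.count I ≤ n - 1 := by
    intro I
    refine le_trans (Multiset.count_le_of_le I hT'le) ?_
    rw [hS', Multiset.count_sum']
    simp only [Multiset.count_replicate]
    rw [Finset.sum_ite_eq']
    split <;> omega
  -- coordinate counts
  set b : Fin r → ℕ := fun i => Multiset.card (T'.filter (fun I => i ∈ I)) with hb
  have hsum0 : ∑ i, b i • e i = 0 := by rw [← aux_sum_swap e T']; exact hTsum
  have hdvd := key b hsum0
  have hble : ∀ i, b i ≤ Multiset.card T' :=
    fun i => Multiset.card_le_card (Multiset.filter_le _ _)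
  have hbpos : ∀ i : Fin r, ∀ I ∈ T', i ∈ I → 0 < b i := by
    intro i I hI hiI
    rw [hb, Multiset.card_pos]
    intro hz
    have : I ∈ T'.filter (fun I => i ∈ I) := Multiset.mem_filter.mpr ⟨hI, hiI⟩
    rw [hz] at this
    exact Multiset.notMem_zero _ this
  have hbn : ∀ i : Fin r, ∀ I ∈ T', i ∈ I → b i = n := by
    intro i I hI hiI
    have h1 := Nat.le_of_dvd (hbpos i I hI hiI) (hdvd i)
    have h2 := hble i
    omega
  obtain ⟨I0, hI0⟩ := Multiset.exists_mem_of_ne_zero hT'0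
  have claim : ∀ (i : Fin r), ∀ I ∈ T', i ∈ I → ∀ J ∈ T', i ∈ J := by
    intro i I hI hiI J hJ
    have hfe : T'.filter (fun I => i ∈ I) = T' := by
      apply Multiset.eq_of_le_of_card_le (Multiset.filter_le _ _)
      have : Multiset.card (T'.filter (fun I => i ∈ I)) = n := hbn i I hI hiI
      omega
    rw [← hfe] at hJ
    exact (Multiset.mem_filter.mp hJ).2
  have hall : ∀ J ∈ T', J = I0 := by
    intro J hJ
    ext i
    exact ⟨fun hi => claim i J hJ hi I0 hI0, fun hi => claim i I0 hI0 hi J hJ⟩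
  obtain ⟨i0, hi0⟩ := hmemT' I0 hI0
  have hTn : Multiset.card T' = n := by
    have h1 := hbn i0 I0 hI0 hi0
    have h2 := hble i0
    omega
  have hrep : T' = Multiset.replicate n I0 := Multiset.eq_replicate.mpr ⟨hTn, hall⟩
  have hc := hcount I0
  rw [hrep, Multiset.count_replicate_self] at hc
  omega
end

section
/- Let G be a finite abelian group, H ≤ G a subgroup, and S a sequence over G of length |S| ≥ exp(G/H)·(d − 1) + η(G/H) for some d ≥ 1. Then one can extract d pairwise disjoint non-empty subsequences S'_1, …, S'_d of S such that σ(S'_i) ∈ H and |S'_i| ≤ exp(G/H) for every i. -/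
open Multiset Finset Filter

/-- Pullback of a sub-multiset along `map f`. -/
lemma pullback {α β : Type*} (f : α → β) :
    ∀ (T' : Multiset β) (S : Multiset α), T' ≤ S.map f → ∃ T ≤ S, T.map f = T' := by
  classical
  intro T'
  induction T' using Multiset.induction with
  | empty => intro S _; exact ⟨0, Multiset.zero_le _, rfl⟩
  | cons b T'' ih =>
    intro S h
    have hb : b ∈ S.map f := mem_of_le h (mem_cons_self _ _)
    obtain ⟨a, ha, rfl⟩ := Multiset.mem_map.1 hb
    have h2 : T'' ≤ (S.erase a).map f := by
      have := Multiset.erase_le_erase (f a) h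
      rw [Multiset.erase_cons_head] at this
      refine this.trans ?_
      have : S.map f = f a ::ₘ (S.erase a).map f := by
        conv_lhs => rw [← Multiset.cons_erase ha]
        rw [Multiset.map_cons]
      rw [this, Multiset.erase_cons_head]
    obtain ⟨T, hTle, hTmap⟩ := ih (S.erase a) h2
    refine ⟨a ::ₘ T, ?_, by rw [Multiset.map_cons, hTmap]⟩
    rw [← Multiset.cons_erase ha]
    exact Multiset.cons_le_cons a hTle

/-- The defining property of `EtaCon` holds for finite groups. -/
lemma eta_spec (Q : Type*) [AddCommGroup Q] [Finite Q] :
    ∀ S : Multiset Q, EtaCon Q ≤ Multiset.card S →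
      ∃ T, T ≤ S ∧ T ≠ 0 ∧ Multiset.card T ≤ AddMonoid.exponent Q ∧ T.sum = 0 := by
  classical
  have hne : {t : ℕ | 1 ≤ t ∧ ∀ S : Multiset Q, t ≤ Multiset.card S →
      ∃ T, T ≤ S ∧ T ≠ 0 ∧ Multiset.card T ≤ AddMonoid.exponent Q ∧ T.sum = 0}.Nonempty := by
    have he : 0 < AddMonoid.exponent Q := by
      have := AddMonoid.exponent_ne_zero_of_finite (G := Q)
      omega
    set e := AddMonoid.exponent Q
    refine ⟨(e - 1) * Nat.card Q + 1, by omega, fun S hS => ?_⟩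
    have hx : ∃ x : Q, e ≤ S.count x := by
      by_contra hc
      push_neg at hc
      have h1 : Multiset.card S = ∑ x ∈ S.toFinset, S.count x :=
        (Multiset.toFinset_sum_count_eq S).symm
      have h2 : ∑ x ∈ S.toFinset, S.count x ≤ ∑ _x ∈ S.toFinset, (e - 1) := by
        refine Finset.sum_le_sum fun x _ => ?_
        have := hc x; omega
      have h3 : S.toFinset.card ≤ Nat.card Q := by
        haveI : Fintype Q := Fintype.ofFinite Q
        have h4 := Finset.card_le_univ (α := Q) S.toFinset
        simpa [Nat.card_eq_fintype_card] using h4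
      rw [Finset.sum_const, smul_eq_mul] at h2
      have : Multiset.card S ≤ (e - 1) * Nat.card Q := by
        calc Multiset.card S ≤ S.toFinset.card * (e-1) := by omega
        _ ≤ Nat.card Q * (e-1) := Nat.mul_le_mul_right _ h3
        _ = (e-1) * Nat.card Q := Nat.mul_comm _ _
      omega
    obtain ⟨x, hx⟩ := hx
    refine ⟨Multiset.replicate e x, (Multiset.le_count_iff_replicate_le).1 hx,
      fun h => he.ne' (by simpa using congrArg Multiset.card h), by simp, ?_⟩
    rw [Multiset.sum_replicate]
    exact AddMonoid.exponent_nsmul_eq_zero x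
  have := Nat.sInf_mem hne
  exact this.2

/-- Extraction of one short subsequence with sum in `H`. -/
lemma extract_one (G : Type*) [AddCommGroup G] [Fintype G] (H : AddSubgroup G)
    (S : Multiset G) (hS : EtaCon (G ⧸ H) ≤ Multiset.card S) :
    ∃ T, T ≤ S ∧ T ≠ 0 ∧ T.sum ∈ H ∧ Multiset.card T ≤ AddMonoid.exponent (G ⧸ H) := by
  set f := QuotientAddGroup.mk' H with hf
  have hcard : Multiset.card (S.map f) = Multiset.card S := Multiset.card_map _ _
  obtain ⟨T', hT'le, hT'ne, hT'card, hT'sum⟩ := eta_spec (G ⧸ H) (S.map f) (by omega)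
  obtain ⟨T, hTle, hTmap⟩ := pullback f T' S hT'le
  refine ⟨T, hTle, ?_, ?_, ?_⟩
  · intro h; rw [h] at hTmap; simp [hTmap.symm] at hT'ne
  · have : f T.sum = 0 := by
      rw [← hT'sum, ← hTmap, AddMonoidHom.map_multiset_sum]
    rwa [hf, QuotientAddGroup.mk'_apply, QuotientAddGroup.eq_zero_iff] at this
  · rw [← hTmap, Multiset.card_map] at hT'card; exact hT'card

/-- Inductive extraction of `d + 1` disjoint short subsequences. -/
lemma rec_lemma (G : Type*) [AddCommGroup G] [Fintype G] (H : AddSubgroup G) :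
    ∀ (d : ℕ) (S : Multiset G),
      AddMonoid.exponent (G ⧸ H) * d + EtaCon (G ⧸ H) ≤ Multiset.card S →
      ∃ S' : Fin (d + 1) → Multiset G, (∑ i, S' i) ≤ S ∧
        ∀ i, S' i ≠ 0 ∧ (S' i).sum ∈ H ∧
          Multiset.card (S' i) ≤ AddMonoid.exponent (G ⧸ H) := by
  classical
  intro d
  induction d with
  | zero =>
    intro S hS
    obtain ⟨T, hle, hne, hsum, hcard⟩ := extract_one G H S (by omega)
    exact ⟨fun _ => T, by simpa using hle, fun _ => ⟨hne, hsum, hcard⟩⟩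
  | succ n ih =>
    intro S hS
    obtain ⟨T, hle, hne, hsum, hcard⟩ := extract_one G H S (by omega)
    have hcardsub : AddMonoid.exponent (G ⧸ H) * n + EtaCon (G ⧸ H) ≤
        Multiset.card (S - T) := by
      have h1 : Multiset.card (S - T) = Multiset.card S - Multiset.card T :=
        Multiset.card_sub hle
      have h2 := Multiset.card_le_card hle
      rw [h1]
      have : AddMonoid.exponent (G ⧸ H) * (n + 1) =
        AddMonoid.exponent (G ⧸ H) * n + AddMonoid.exponent (G ⧸ H) := by ring
      omega
    obtain ⟨S'', hle'', hprop''⟩ := ih (S - T) hcardsub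
    refine ⟨Fin.cons T S'', ?_, fun i => ?_⟩
    · rw [Fin.sum_univ_succ]
      simp only [Fin.cons_zero, Fin.cons_succ]
      exact (le_tsub_iff_left hle).1 hle''
    · induction i using Fin.cases with
      | zero => simpa using ⟨hne, hsum, hcard⟩
      | succ j => simpa using hprop'' j

/-- extraction of `d` disjoint short subsequences with sums in `H`. -/
theorem stmt_7 (G : Type*) [AddCommGroup G] [Fintype G] (H : AddSubgroup G)
    (d : ℕ) (hd : 1 ≤ d) (S : Multiset G)
    (hS : AddMonoid.exponent (G ⧸ H) * (d - 1) + EtaCon (G ⧸ H) ≤ Multiset.card S) :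
    ∃ S' : Fin d → Multiset G, (∑ i, S' i) ≤ S ∧
      ∀ i, S' i ≠ 0 ∧ (S' i).sum ∈ H ∧
        Multiset.card (S' i) ≤ AddMonoid.exponent (G ⧸ H) := by
  obtain ⟨m, rfl⟩ : ∃ m, d = m + 1 := ⟨d - 1, by omega⟩
  exact rec_lemma G H m S (by simpa using hS)
end

section
/- For all integers n, r ≥ 1, D(C_n^r) ≤ r(n − 1) + 1 + (c_r − r)·(n/P(n) − 1), where c_r is any constant such that η(C_m^r) ≤ c_r(m − 1) + 1 for all m ≥ 1 and c_r ≥ r. -/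
open Multiset Finset Filter

section nilpot
variable {R : Type*} [CommRing R]

/-- Product of more than `r*(q-1)` elements of the ideal generated by `r` elements
each of whose `q`-th power vanishes, is zero. -/
lemma prod_eq_zero_of_span {q : ℕ} (hq0 : 1 ≤ q) :
    ∀ (r : ℕ) (z : Fin r → R), (∀ j, z j ^ q = 0) →
    ∀ {ι : Type} (s : Finset ι) (a : ι → R),
      (∀ i ∈ s, a i ∈ Ideal.span (Set.range z)) → r * (q - 1) < s.card →
      ∏ i ∈ s, a i = 0 := by
  intro r
  induction r with
  | zero =>
    intro z hz ι s a ha hcard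
    obtain ⟨i, hi⟩ := Finset.card_pos.mp (by simpa using hcard)
    refine Finset.prod_eq_zero hi ?_
    have := ha i hi
    simp only [Set.range_eq_empty, Ideal.span_empty, Ideal.mem_bot] at this
    exact this
  | succ r ih =>
    intro z hz ι s a ha hcard
    classical
    -- split the span
    have hspan : Ideal.span (Set.range z) =
        Ideal.span {z 0} ⊔ Ideal.span (Set.range (z ∘ Fin.succ)) := by
      rw [Fin.range_fin_succ z, ← Ideal.span_insert]; rfl
    -- decompose each a i
    have hdec : ∀ i ∈ s, ∃ b c : R, b ∈ Ideal.span ({z 0} : Set R) ∧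
        c ∈ Ideal.span (Set.range (z ∘ Fin.succ)) ∧ a i = b + c := by
      intro i hi
      have := ha i hi
      rw [hspan] at this
      obtain ⟨b, hb, c, hc, h⟩ := Submodule.mem_sup.mp this
      exact ⟨b, c, hb, hc, h.symm⟩
    choose! b c hb hc habc using hdec
    have : ∏ i ∈ s, a i = ∏ i ∈ s, (b i + c i) :=
      Finset.prod_congr rfl fun i hi => habc i hi
    rw [this, Finset.prod_add]
    refine Finset.sum_eq_zero fun t ht => ?_
    rw [Finset.mem_powerset] at ht
    by_cases hcase : q ≤ t.card
    · -- the b-product vanishes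
      have : ∏ i ∈ t, b i = 0 := by
        have hbz : ∀ i ∈ t, ∃ d, d * z 0 = b i := fun i hi =>
          Ideal.mem_span_singleton'.mp (hb i (ht hi))
        choose d hd using hbz
        have : ∏ i ∈ t, b i = (∏ i ∈ t.attach, d i i.2) * z 0 ^ t.card := by
          rw [← Finset.prod_attach t b]
          have : ∏ i ∈ t.attach, b i.1 = ∏ i ∈ t.attach, (d i.1 i.2 * z 0) :=
            Finset.prod_congr rfl fun i _ => (hd i.1 i.2).symm
          rw [this, Finset.prod_mul_distrib, Finset.prod_const, Finset.card_attach]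
        rw [this, ← Nat.sub_add_cancel hcase, pow_add, hz 0, mul_zero, mul_zero]
      rw [this, zero_mul]
    · -- the c-product vanishes by induction
      push_neg at hcase
      have hcc : ∏ i ∈ s \ t, c i = 0 := by
        refine ih (z ∘ Fin.succ) (fun j => hz j.succ) (s \ t) c
          (fun i hi => hc i (Finset.mem_sdiff.mp hi).1) ?_
        have h1 : (s \ t).card = s.card - t.card := Finset.card_sdiff_of_subset ht
        have h2 := Finset.card_le_card ht
        have h3 : (r+1)*(q-1) = r*(q-1)+(q-1) := by ring
        omega
      rw [hcc, mul_zero]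

end nilpot

section olson

variable (p k r : ℕ) [hpf : Fact p.Prime]

local notation "GG" => (Fin r → ZMod (p ^ k))
local notation "RR" => MonoidAlgebra (ZMod p) (Multiplicative (Fin r → ZMod (p ^ k)))
local notation "FF" => MonoidAlgebra.of (ZMod p) (Multiplicative (Fin r → ZMod (p ^ k)))

lemma charP_RR : CharP RR p := by
  refine charP_of_injective_ringHom (R := ZMod p)
    (f := MonoidAlgebra.singleOneRingHom) ?_ p
  intro a b hab
  simpa using congrArg (fun f => f.coeff (1 : Multiplicative GG)) hab

lemma z_pow_eq_zero (j : Fin r) :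
    (FF (Multiplicative.ofAdd (Pi.single j 1 : GG)) - 1) ^ p ^ k = 0 := by
  haveI := charP_RR p k r
  have h2 : FF (Multiplicative.ofAdd (Pi.single j 1 : GG)) ^ p ^ k = 1 := by
    rw [← map_pow, ← ofAdd_nsmul]
    have h3 : (p ^ k) • (Pi.single j 1 : GG) = 0 := by
      funext i
      by_cases hij : i = j
      · subst hij
        simp [Pi.mul_apply, Pi.natCast_apply, ZMod.natCast_self, Pi.single_apply]
      · simp [Pi.mul_apply, Pi.natCast_apply, ZMod.natCast_self, Pi.single_apply, hij]
    rw [h3]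
    simp [MonoidAlgebra.one_def]
  rw [sub_pow_char_pow, h2, one_pow, sub_self]

lemma mem_span_z (g : GG) :
    FF (Multiplicative.ofAdd g) - 1 ∈
      Ideal.span (Set.range fun j : Fin r =>
        FF (Multiplicative.ofAdd (Pi.single j 1 : GG)) - 1) := by
  haveI : NeZero (p ^ k) := ⟨pow_ne_zero _ hpf.out.ne_zero⟩
  set I := Ideal.span (Set.range fun j : Fin r =>
        FF (Multiplicative.ofAdd (Pi.single j 1 : GG)) - 1) with hI
  have hmulI : ∀ a b : RR, a - 1 ∈ I → b - 1 ∈ I → a * b - 1 ∈ I := by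
    intro a b ha hb
    have : a * b - 1 = a * (b - 1) + (a - 1) := by ring
    rw [this]
    exact Ideal.add_mem _ (Ideal.mul_mem_left _ _ hb) ha
  have hpowI : ∀ a : RR, a - 1 ∈ I → ∀ t : ℕ, a ^ t - 1 ∈ I := by
    intro a ha t
    induction t with
    | zero => simpa using Ideal.zero_mem I
    | succ t iht => rw [pow_succ]; exact hmulI _ _ iht ha
  have hgsum : g = ∑ j : Fin r, ((g j).val • (Pi.single j 1 : GG)) := by
    have h4 : ∀ j, (g j).val • (Pi.single j 1 : GG) = Pi.single j (g j) := by
      intro j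
      rw [← Pi.single_smul]
      congr 1
      rw [nsmul_eq_mul, mul_one, ZMod.natCast_rightInverse (g j)]
    rw [funext h4]
    exact (Finset.univ_sum_single g).symm
  have h5 : FF (Multiplicative.ofAdd g) =
      ∏ j : Fin r, (FF (Multiplicative.ofAdd (Pi.single j 1 : GG))) ^ (g j).val := by
    conv_lhs => rw [hgsum]
    rw [ofAdd_sum, map_prod]
    refine Finset.prod_congr rfl fun j _ => ?_
    rw [ofAdd_nsmul, map_pow]
  rw [h5]
  refine Finset.prod_induction _ (fun x => x - 1 ∈ I) (fun a b => hmulI a b) (by simp) ?_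
  intro j _
  exact hpowI _ (Ideal.subset_span ⟨j, rfl⟩) _

lemma olson_aux (l : List GG) (hlen : r * (p ^ k - 1) + 1 ≤ l.length)
    (hne : ∀ t : Finset (Fin l.length), t ≠ ∅ → (∑ i ∈ t, l.get i) ≠ 0) : False := by
  classical
  haveI : NeZero (p ^ k) := ⟨pow_ne_zero _ hpf.out.ne_zero⟩
  haveI := charP_RR p k r
  -- the product of all `F (ofAdd gᵢ) - 1` vanishes
  have hprod : ∏ i : Fin l.length, (FF (Multiplicative.ofAdd (l.get i)) - 1) = 0 := by
    refine prod_eq_zero_of_span (Nat.one_le_iff_ne_zero.mpr (NeZero.ne (p ^ k))) r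
      (fun j : Fin r => FF (Multiplicative.ofAdd (Pi.single j 1 : GG)) - 1)
      (fun j => z_pow_eq_zero p k r j)
      Finset.univ _ (fun i _ => mem_span_z p k r _) ?_
    rw [Finset.card_univ, Fintype.card_fin]
    omega
  -- expand the product
  have hexp : ∏ i : Fin l.length, (FF (Multiplicative.ofAdd (l.get i)) - 1) =
      ∑ t ∈ (Finset.univ : Finset (Fin l.length)).powerset,
        MonoidAlgebra.single (Multiplicative.ofAdd (∑ i ∈ t, l.get i))
          ((-1 : ZMod p) ^ (Finset.univ \ t).card) := by
    have h0 : ∀ i : Fin l.length, FF (Multiplicative.ofAdd (l.get i)) - 1 =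
        FF (Multiplicative.ofAdd (l.get i)) + (-1) := by intro i; ring
    rw [funext h0, Finset.prod_add]
    refine Finset.sum_congr rfl fun t _ => ?_
    have h1 : ∏ i ∈ t, FF (Multiplicative.ofAdd (l.get i)) =
        MonoidAlgebra.single (Multiplicative.ofAdd (∑ i ∈ t, l.get i)) (1 : ZMod p) := by
      calc ∏ i ∈ t, FF (Multiplicative.ofAdd (l.get i))
          = FF (∏ i ∈ t, Multiplicative.ofAdd (l.get i)) := (map_prod _ _ _).symm
        _ = FF (Multiplicative.ofAdd (∑ i ∈ t, l.get i)) := by rw [ofAdd_sum]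
        _ = _ := by rw [MonoidAlgebra.of_apply]
    have h2 : ∏ _i ∈ Finset.univ \ t, (-1 : RR) =
        MonoidAlgebra.single (1 : Multiplicative GG)
          ((-1 : ZMod p) ^ (Finset.univ \ t).card) := by
      rw [Finset.prod_const]
      have hneg : (-1 : RR) = MonoidAlgebra.single (1 : Multiplicative GG)
          (-1 : ZMod p) := by
        rw [MonoidAlgebra.single_neg]
        exact congrArg Neg.neg MonoidAlgebra.one_def
      rw [hneg, MonoidAlgebra.single_pow, one_pow]
    rw [h1, h2, MonoidAlgebra.single_mul_single, mul_one, one_mul]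
  -- evaluate the coefficient at the identity
  have hcoeff : ∑ t ∈ (Finset.univ : Finset (Fin l.length)).powerset,
      (if Multiplicative.ofAdd (∑ i ∈ t, l.get i) =
          (1 : Multiplicative GG) then
        ((-1 : ZMod p) ^ (Finset.univ \ t).card) else 0) = 0 := by
    have := congrArg (fun f : RR => f.coeff (1 : Multiplicative GG))
      (hexp ▸ hprod)
    simpa [MonoidAlgebra.coeff_sum, MonoidAlgebra.coeff_single, Finsupp.finset_sum_apply, Finsupp.single_apply] using this
  -- conclude
  rw [Finset.sum_eq_single_of_mem ∅ (Finset.empty_mem_powerset _) ?_] at hcoeff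
  · simp only [Finset.sum_empty, ofAdd_zero, if_true, Finset.sdiff_empty,
      Finset.card_univ, Fintype.card_fin] at hcoeff
    exact pow_ne_zero l.length (neg_ne_zero.mpr (one_ne_zero (α := ZMod p))) hcoeff
  · intro t _ htne
    rw [if_neg]
    intro h9
    exact hne t htne (Multiplicative.ofAdd.injective (h9.trans ofAdd_zero.symm))

end olson

theorem olson (q r : ℕ) (hq : IsPrimePow q) (S : Multiset (Fin r → ZMod q))
    (hS : r * (q - 1) + 1 ≤ Multiset.card S) :
    ∃ T, T ≤ S ∧ T ≠ 0 ∧ T.sum = 0 := by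
  classical
  obtain ⟨p, k, hp, hk, rfl⟩ := hq
  rw [← Nat.prime_iff] at hp
  haveI : Fact p.Prime := ⟨hp⟩
  by_contra hcon
  push_neg at hcon
  obtain ⟨l, rfl⟩ := Quotient.exists_rep S
  have hlen : r * (p ^ k - 1) + 1 ≤ l.length := by
    simpa using hS
  refine olson_aux p k r l hlen ?_
  intro t htne hsum
  refine hcon (t.val.map l.get) ?_ ?_ hsum
  · have h6 : t.val ≤ (Finset.univ : Finset (Fin l.length)).val :=
      Finset.val_le_iff.mpr (Finset.subset_univ t)
    have h7 := Multiset.map_le_map (f := l.get) h6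
    refine le_trans h7 (le_of_eq ?_)
    rw [Fin.univ_def]
    change Multiset.map l.get (List.finRange l.length : Multiset (Fin l.length)) = _
    rw [Multiset.map_coe, List.map_get_finRange]
    rfl
  · intro h8
    apply htne
    rw [← Finset.card_eq_zero]
    have := congrArg Multiset.card h8
    simpa using this

lemma exists_le_map {α β : Type*} (f : α → β) :
    ∀ (T' : Multiset β) (S : Multiset α), T' ≤ S.map f → ∃ T, T ≤ S ∧ T.map f = T' := by
  classical
  intro T'
  induction T' using Multiset.induction with
  | empty => exact fun S _ => ⟨0, Multiset.zero_le S, rfl⟩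
  | cons a T' ih =>
    intro S h
    have ha : a ∈ S.map f := mem_of_le h (mem_cons_self a T')
    obtain ⟨x, hx, rfl⟩ := Multiset.mem_map.mp ha
    have hS : S = x ::ₘ S.erase x := (Multiset.cons_erase hx).symm
    rw [hS, Multiset.map_cons] at h
    have h2 : T' ≤ (S.erase x).map f := (Multiset.cons_le_cons_iff _).mp h
    obtain ⟨T, hT, rfl⟩ := ih (S.erase x) h2
    refine ⟨x ::ₘ T, ?_, by rw [Multiset.map_cons]⟩
    rw [hS]
    exact Multiset.cons_le_cons _ hT

section eta
variable (r m c : ℕ)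

lemma pi_nsmul_self_eq_zero (g : Fin r → ZMod m) : m • g = 0 := by
  funext i
  simp [Pi.smul_apply, nsmul_eq_mul, Pi.mul_apply, Pi.natCast_apply, ZMod.natCast_self]

lemma eta_prop (hm : 1 ≤ m) (hc : EtaCon (Fin r → ZMod m) ≤ c * (m - 1) + 1) :
    ∀ S : Multiset (Fin r → ZMod m), c * (m - 1) + 1 ≤ Multiset.card S →
      ∃ T, T ≤ S ∧ T ≠ 0 ∧ Multiset.card T ≤ m ∧ T.sum = 0 := by
  haveI : NeZero m := ⟨by omega⟩
  set G := Fin r → ZMod m with hG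
  have hexpdvd : AddMonoid.exponent G ∣ m :=
    AddMonoid.exponent_dvd_of_forall_nsmul_eq_zero (pi_nsmul_self_eq_zero r m)
  have hexple : AddMonoid.exponent G ≤ m := Nat.le_of_dvd (by omega) hexpdvd
  have hcardpos : 1 ≤ Fintype.card G := Fintype.card_pos
  -- the defining set of `EtaCon G` is non-empty
  have hmem : (Fintype.card G * m) ∈ {t : ℕ | 1 ≤ t ∧ ∀ S : Multiset G, t ≤ Multiset.card S →
      ∃ T, T ≤ S ∧ T ≠ 0 ∧ Multiset.card T ≤ AddMonoid.exponent G ∧ T.sum = 0} := by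
    constructor
    · exact Nat.one_le_iff_ne_zero.mpr (by positivity)
    intro S hS
    -- pigeonhole: some element occurs at least `m` times
    have hg : ∃ g : G, m ≤ S.count g := by
      by_contra hall
      push_neg at hall
      have h1 : Multiset.card S = ∑ a ∈ S.toFinset, S.count a :=
        (Multiset.toFinset_sum_count_eq S).symm
      have h2 : ∑ a ∈ S.toFinset, S.count a ≤ ∑ _a ∈ S.toFinset, (m - 1) :=
        Finset.sum_le_sum fun a _ => by have := hall a; omega
      have h3 : ∑ _a ∈ S.toFinset, (m - 1) = S.toFinset.card * (m - 1) := by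
        rw [Finset.sum_const, smul_eq_mul]
      have h4 : S.toFinset.card * (m - 1) ≤ Fintype.card G * (m - 1) :=
        Nat.mul_le_mul_right _ (Finset.card_le_univ _)
      have h5 : Fintype.card G * (m - 1) < Fintype.card G * m :=
        mul_lt_mul_of_pos_left (by omega) (by omega)
      omega
    obtain ⟨g, hg⟩ := hg
    have hord : addOrderOf g ∣ m := addOrderOf_dvd_of_nsmul_eq_zero (by
      have := pi_nsmul_self_eq_zero r m g
      exact this)
    have hordpos : 0 < addOrderOf g := addOrderOf_pos g
    refine ⟨Multiset.replicate (addOrderOf g) g, ?_, ?_, ?_, ?_⟩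
    · rw [Multiset.le_iff_count]
      intro a
      rw [Multiset.count_replicate]
      split
      · next h => subst h; exact le_trans (Nat.le_of_dvd (by omega) hord) hg
      · omega
    · intro h
      have := congrArg Multiset.card h
      simp only [Multiset.card_replicate, Multiset.card_zero] at this
      omega
    · rw [Multiset.card_replicate]
      exact Nat.le_of_dvd
        (Nat.pos_of_ne_zero (AddMonoid.exponent_ne_zero_of_finite))
        (AddMonoid.addOrder_dvd_exponent g)
    · rw [Multiset.sum_replicate]
      exact addOrderOf_nsmul_eq_zero g
  have hEta := Nat.sInf_mem (Set.nonempty_of_mem hmem)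
  rw [show sInf {t : ℕ | 1 ≤ t ∧ ∀ S : Multiset G, t ≤ Multiset.card S →
      ∃ T, T ≤ S ∧ T ≠ 0 ∧ Multiset.card T ≤ AddMonoid.exponent G ∧ T.sum = 0} =
      EtaCon G from rfl] at hEta
  intro S hS
  obtain ⟨T, hTS, hTne, hTcard, hTsum⟩ := hEta.2 S (le_trans hc hS)
  exact ⟨T, hTS, hTne, le_trans hTcard hexple, hTsum⟩

end eta

section extract
variable (n m r : ℕ)

/-- Componentwise reduction mod `m` as an `AddMonoidHom`. -/
def projHom (hdvd : m ∣ n) : (Fin r → ZMod n) →+ (Fin r → ZMod m) where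
  toFun := fun g i => ZMod.castHom hdvd (ZMod m) (g i)
  map_zero' := by funext i; simp
  map_add' := by
    intro a b; funext i; exact map_add (ZMod.castHom hdvd (ZMod m)) _ _

lemma castHom_eq_val_cast (hdvd : m ∣ n) [NeZero n] (x : ZMod n) :
    ZMod.castHom hdvd (ZMod m) x = ((x.val : ℕ) : ZMod m) := by
  conv_lhs => rw [← ZMod.natCast_zmod_val x]
  rw [map_natCast]

lemma extract_one_s8 (hn : 1 ≤ n) (hm : 1 ≤ m) (hdvd : m ∣ n) (E : ℕ)
    (hEta : ∀ S : Multiset (Fin r → ZMod m), E ≤ Multiset.card S →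
      ∃ T, T ≤ S ∧ T ≠ 0 ∧ Multiset.card T ≤ m ∧ T.sum = 0)
    (S : Multiset (Fin r → ZMod n)) (hS : E ≤ Multiset.card S) :
    ∃ T, T ≤ S ∧ T ≠ 0 ∧ Multiset.card T ≤ m ∧ ∀ i, (m : ℕ) ∣ (T.sum i).val := by
  haveI : NeZero n := ⟨by omega⟩
  obtain ⟨T', hT'le, hT'ne, hT'card, hT'sum⟩ :=
    hEta (S.map (projHom n m r hdvd)) (by rwa [Multiset.card_map])
  obtain ⟨T, hTS, rfl⟩ := exists_le_map _ T' S hT'le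
  refine ⟨T, hTS, ?_, by rwa [Multiset.card_map] at hT'card, ?_⟩
  · rintro rfl; simp at hT'ne
  · intro i
    have h1 : projHom n m r hdvd T.sum = 0 := by
      rw [AddMonoidHom.map_multiset_sum]
      exact hT'sum
    have h2 : ZMod.castHom hdvd (ZMod m) (T.sum i) = 0 := congrFun h1 i
    rw [castHom_eq_val_cast n m hdvd] at h2
    exact (ZMod.natCast_eq_zero_iff _ _).mp h2

lemma extract_many (hn : 1 ≤ n) (hm : 1 ≤ m) (hdvd : m ∣ n) (E : ℕ)
    (hEta : ∀ S : Multiset (Fin r → ZMod m), E ≤ Multiset.card S →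
      ∃ T, T ≤ S ∧ T ≠ 0 ∧ Multiset.card T ≤ m ∧ T.sum = 0) :
    ∀ (k : ℕ) (S : Multiset (Fin r → ZMod n)), E + m * k ≤ Multiset.card S →
      ∃ L : List (Multiset (Fin r → ZMod n)), L.length = k + 1 ∧
        (L : Multiset (Multiset (Fin r → ZMod n))).sum ≤ S ∧
        ∀ T ∈ L, T ≠ 0 ∧ ∀ i, (m : ℕ) ∣ (T.sum i).val := by
  intro k
  induction k with
  | zero =>
    intro S hS
    obtain ⟨T, hTS, hTne, _, hdiv⟩ := extract_one_s8 n m r hn hm hdvd E hEta S (by omega)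
    refine ⟨[T], rfl, ?_, ?_⟩
    · simpa using hTS
    · intro T' hT'
      rw [List.mem_singleton] at hT'
      subst hT'
      exact ⟨hTne, hdiv⟩
  | succ k ih =>
    intro S hS
    obtain ⟨T, hTS, hTne, hTcard, hdiv⟩ := extract_one_s8 n m r hn hm hdvd E hEta S (by omega)
    have hcard : E + m * k ≤ Multiset.card (S - T) := by
      rw [Multiset.card_sub hTS]
      have := Multiset.card_le_card hTS
      have h2 : m * (k + 1) = m * k + m := by ring
      omega
    obtain ⟨L, hLlen, hLle, hLprop⟩ := ih (S - T) hcard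
    refine ⟨T :: L, by simp [hLlen], ?_, ?_⟩
    · have h3 : (↑(T :: L) : Multiset (Multiset (Fin r → ZMod n))) =
        T ::ₘ (↑L : Multiset (Multiset (Fin r → ZMod n))) := rfl
      rw [h3, Multiset.sum_cons]
      have h4 : (↑L : Multiset (Multiset (Fin r → ZMod n))).sum ≤ S - T := hLle
      calc T + (↑L : Multiset (Multiset (Fin r → ZMod n))).sum
          ≤ T + (S - T) := add_le_add_right h4 T
        _ = S := add_tsub_cancel_of_le hTS
    · intro T' hT'
      rcases List.mem_cons.mp hT' with h | h
      · subst h; exact ⟨hTne, hdiv⟩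
      · exact hLprop T' h

end extract

lemma maxPP_mem {n : ℕ} (hn : 2 ≤ n) : maxPP n ∈ (n.divisors).filter IsPrimePow := by
  obtain ⟨p, hp, hpdvd⟩ := Nat.exists_prime_and_dvd (show n ≠ 1 by omega)
  have hne : ((n.divisors).filter IsPrimePow).Nonempty :=
    ⟨p, Finset.mem_filter.mpr ⟨Nat.mem_divisors.mpr ⟨hpdvd, by omega⟩, hp.isPrimePow⟩⟩
  obtain ⟨a, ha⟩ := Finset.max_of_nonempty hne
  have h2 : maxPP n = a := by rw [maxPP, ha, WithBot.unbotD_coe]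
  rw [h2]
  exact Finset.mem_of_max ha

lemma arith_key (q m r c : ℕ) (hm : 1 ≤ m) (hq : 1 ≤ q) (hcr : r ≤ c) :
    r * (q * m - 1) + 1 + (c - r) * (m - 1) = (c * (m - 1) + 1) + m * (r * (q - 1)) := by
  obtain ⟨m', rfl⟩ : ∃ m', m = m' + 1 := ⟨m - 1, by omega⟩
  obtain ⟨q', rfl⟩ : ∃ q', q = q' + 1 := ⟨q - 1, by omega⟩
  obtain ⟨d, rfl⟩ : ∃ d, c = r + d := ⟨c - r, by omega⟩
  simp only [Nat.add_sub_cancel]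
  have h1 : (q' + 1) * (m' + 1) = q' * m' + q' + m' + 1 := by ring
  rw [h1]
  simp only [Nat.add_sub_cancel, Nat.add_sub_cancel_left]
  ring

lemma multiset_sum_mono {β : Type*} {A B : Multiset (Multiset β)} (h : A ≤ B) :
    A.sum ≤ B.sum := by
  obtain ⟨u, rfl⟩ := Multiset.le_iff_exists_add.mp h
  rw [Multiset.sum_add]
  exact Multiset.le_add_right _ _

lemma multiset_sum_sum {β : Type*} [AddCommMonoid β] (W : Multiset (Multiset β)) :
    W.sum.sum = (W.map Multiset.sum).sum := by
  induction W using Multiset.induction with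
  | empty => simp
  | cons T W ih => simp [Multiset.sum_cons, ih]

lemma multiset_sum_apply {ι : Type*} {M : Type*} [AddCommMonoid M]
    (X : Multiset (ι → M)) (i : ι) : X.sum i = (X.map (fun g => g i)).sum := by
  induction X using Multiset.induction with
  | empty => simp
  | cons g X ih => simp [Multiset.sum_cons, ih]

lemma multiset_sum_natCast {R : Type*} [AddCommMonoidWithOne R] (V : Multiset ℕ) :
    ((V.sum : ℕ) : R) = (V.map (fun v : ℕ => (v : R))).sum := by
  induction V using Multiset.induction with
  | empty => simp
  | cons v V ih => simp [Multiset.sum_cons, ih]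

/-- the main upper bound for `D(C_n^r)`. -/
theorem stmt_8 (n r : ℕ) (hn : 1 ≤ n) (hr : 1 ≤ r) (c : ℕ) (hcr : r ≤ c)
    (hc : ∀ m : ℕ, 1 ≤ m → EtaCon (Fin r → ZMod m) ≤ c * (m - 1) + 1) :
    DavCon (Fin r → ZMod n) ≤ r * (n - 1) + 1 + (c - r) * (n / maxPP n - 1) := by
  classical
  rcases eq_or_lt_of_le hn with h1 | h2
  · -- trivial case n = 1
    subst h1
    have hD : DavCon (Fin r → ZMod 1) ≤ 1 := by
      unfold DavCon
      refine Nat.sInf_le ⟨le_refl 1, ?_⟩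
      intro S hS
      obtain ⟨x, hx⟩ := Multiset.exists_mem_of_ne_zero
        (show S ≠ 0 by intro h; rw [h] at hS; simp at hS)
      refine ⟨{x}, Multiset.singleton_le.mpr hx, by simp, ?_⟩
      rw [Multiset.sum_singleton]
      exact Subsingleton.elim _ _
    have : r * (1 - 1) = 0 := by simp
    omega
  · -- main case n ≥ 2
    have hn2 : 2 ≤ n := h2
    have hqmem := maxPP_mem hn2
    rw [Finset.mem_filter, Nat.mem_divisors] at hqmem
    obtain ⟨⟨hqdvd, -⟩, hq⟩ := hqmem
    have hq2 : 2 ≤ maxPP n := hq.two_le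
    set q := maxPP n with hqdef
    set m := n / q with hmdef
    have hqm : n = q * m := (Nat.mul_div_cancel' hqdvd).symm
    have hm1 : 1 ≤ m := Nat.div_pos (Nat.le_of_dvd (by omega) hqdvd) (by omega)
    have hmdvd : m ∣ n := ⟨q, by rw [hqm]; ring⟩
    have hEta := eta_prop r m c hm1 (hc m hm1)
    have harith : r * (n - 1) + 1 + (c - r) * (m - 1) =
        (c * (m - 1) + 1) + m * (r * (q - 1)) := by
      rw [show n - 1 = q * m - 1 from by rw [← hqm]]
      exact arith_key q m r c hm1 (by omega) hcr
    unfold DavCon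
    refine Nat.sInf_le ⟨by omega, ?_⟩
    intro S hS
    -- extract r*(q-1)+1 disjoint pieces, each with sum divisible by m componentwise
    obtain ⟨L, hLlen, hLle, hLprop⟩ := extract_many n m r (by omega) hm1 hmdvd
      (c * (m - 1) + 1) hEta (r * (q - 1)) S (by omega)
    -- apply Olson's theorem to the quotients
    set u : Multiset (Fin r → ZMod n) → (Fin r → ZMod q) :=
      fun T i => (((T.sum i).val / m : ℕ) : ZMod q) with hu
    have hcard : r * (q - 1) + 1 ≤
        Multiset.card ((↑L : Multiset (Multiset (Fin r → ZMod n))).map u) := by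
      rw [Multiset.card_map, Multiset.coe_card, hLlen]
    obtain ⟨U, hUle, hUne, hUsum⟩ := olson q r hq _ hcard
    obtain ⟨W, hWle, rfl⟩ := exists_le_map u U _ hUle
    have hWprop : ∀ T ∈ W, T ≠ 0 ∧ ∀ i, (m : ℕ) ∣ (T.sum i).val := by
      intro T hT
      exact hLprop T (Multiset.mem_coe.mp (Multiset.mem_of_le hWle hT))
    refine ⟨W.sum, le_trans (multiset_sum_mono hWle) hLle, ?_, ?_⟩
    · -- non-emptiness
      have hWne : W ≠ 0 := by rintro rfl; simp at hUne
      obtain ⟨T₀, hT₀⟩ := Multiset.exists_mem_of_ne_zero hWne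
      obtain ⟨W', rfl⟩ := Multiset.exists_cons_of_mem hT₀
      intro hzero
      rw [Multiset.sum_cons] at hzero
      have hcard0 := congrArg Multiset.card hzero
      rw [Multiset.card_add] at hcard0
      have hT₀ne := (hWprop T₀ (Multiset.mem_cons_self _ _)).1
      have : Multiset.card T₀ ≠ 0 := fun h => hT₀ne (Multiset.card_eq_zero.mp h)
      rw [Multiset.card_zero] at hcard0
      omega
    · -- the sum is zero
      funext i
      haveI : NeZero n := ⟨by omega⟩
      haveI : NeZero q := ⟨by omega⟩
      rw [multiset_sum_sum]
      -- evaluate componentwise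
      have hev : (Multiset.map Multiset.sum W).sum i =
          ((Multiset.map (fun T => (T.sum i).val) W).sum : ℕ) := by
        rw [multiset_sum_apply, Multiset.map_map, multiset_sum_natCast, Multiset.map_map]
        refine congrArg Multiset.sum (Multiset.map_congr rfl fun T _ => ?_)
        exact (ZMod.natCast_zmod_val (T.sum i)).symm
      rw [hev]
      -- divisibility
      have hqdvdsum : (q : ℕ) ∣ (Multiset.map (fun T => (T.sum i).val / m) W).sum := by
        have h3 : (Multiset.map u W).sum i =
            ((Multiset.map (fun T => (T.sum i).val / m) W).sum : ℕ) := by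
          rw [multiset_sum_apply, Multiset.map_map, multiset_sum_natCast, Multiset.map_map]
          rfl
        have h5 : (Multiset.map u W).sum i = 0 := by rw [hUsum]; rfl
        exact (ZMod.natCast_eq_zero_iff _ _).mp (h3.symm.trans h5)
      have hmsum : (Multiset.map (fun T => (T.sum i).val) W).sum =
          m * (Multiset.map (fun T => (T.sum i).val / m) W).sum := by
        rw [← Multiset.sum_map_mul_left]
        refine congrArg Multiset.sum (Multiset.map_congr rfl fun T hT => ?_)
        exact (Nat.mul_div_cancel' ((hWprop T hT).2 i)).symm
      obtain ⟨w, hw⟩ := hqdvdsum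
      rw [Pi.zero_apply, hmsum, hw]
      have : (m * (q * w) : ℕ) = n * w := by rw [hqm]; ring
      rw [this, Nat.cast_mul, ZMod.natCast_self, zero_mul]
end
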